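/- Let η > 0, ρ ≥ ρ̲ > 0 with η ≤ η̄, and let c > 0. Then the truncated second moment of the centered symmetric doubly truncated normal distribution satisfies ∫_{{y : |y| ≥ c}} y² · f_{0,η,ρ}(y) dy ≤ η̄² · (1/(2Φ(ρ̲)-1)) · √(2/π) · ∫_{c/η̄}^∞ u² exp(-u²/2) du. -/

import Mathlib

open MeasureTheory Real Set Filter

/-- The standard normal density `φ(x) = (2π)^(-1/2) exp(-x²/2)`. -/
noncomputable def stdNormalPDF (x : ℝ) : ℝ :=
  (Real.sqrt (2 * Real.pi))⁻¹ * Real.exp (-x ^ 2 / 2)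

/-- The standard normal CDF `Φ(x) = ∫_{-∞}^x φ(t) dt`. -/
noncomputable def stdNormalCDF (x : ℝ) : ℝ :=
  ∫ t in Set.Iic x, stdNormalPDF t

/-- The symmetric doubly truncated normal (SDTN) density with location `μ`, scale `η`
and truncation parameter `ρ`. -/
noncomputable def sdtnPDF (μ η ρ : ℝ) (x : ℝ) : ℝ :=
  if x ∈ Set.Icc (μ - ρ * η) (μ + ρ * η) then
    stdNormalPDF ((x - μ) / η) / (η * (2 * stdNormalCDF ρ - 1))
  else 0

lemma phi_pos (x : ℝ) : 0 < stdNormalPDF x := by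
  have := Real.pi_pos
  unfold stdNormalPDF
  positivity

lemma phi_eq (x : ℝ) : stdNormalPDF x = (Real.sqrt (2 * Real.pi))⁻¹ * Real.exp (-(1/2) * x ^ 2) := by
  unfold stdNormalPDF; ring_nf

lemma phi_even (x : ℝ) : stdNormalPDF (-x) = stdNormalPDF x := by
  unfold stdNormalPDF; rw [neg_pow]; ring_nf

lemma integrable_phi : Integrable stdNormalPDF := by
  have : stdNormalPDF = fun x => (Real.sqrt (2 * Real.pi))⁻¹ * Real.exp (-(1/2) * x ^ 2) :=
    funext phi_eq
  rw [this]
  exact (integrable_exp_neg_mul_sq (by norm_num : (0:ℝ) < 1/2)).const_mul _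

lemma integrable_sq_exp {b : ℝ} (hb : 0 < b) :
    Integrable (fun x : ℝ => x ^ 2 * Real.exp (-b * x ^ 2)) := by
  have h := integrable_rpow_mul_exp_neg_mul_sq hb (by norm_num : (-1:ℝ) < 2)
  have : ∀ x : ℝ, x ^ (2:ℝ) = x ^ (2:ℕ) := fun x => by
    rw [← Real.rpow_natCast x 2]; norm_num
  simpa [this] using h

lemma integral_phi : ∫ x, stdNormalPDF x = 1 := by
  simp_rw [phi_eq]
  rw [integral_const_mul, integral_gaussian]
  rw [show Real.pi / (1/2) = 2 * Real.pi by ring]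
  rw [inv_mul_cancel₀]
  positivity

lemma cdf_zero : stdNormalCDF 0 = 1/2 := by
  have hsym : stdNormalCDF 0 = ∫ t in Ioi (0:ℝ), stdNormalPDF t := by
    unfold stdNormalCDF
    rw [show (0:ℝ) = -0 by ring, ← integral_comp_neg_Iic]
    simp [phi_even]
  have hadd : stdNormalCDF 0 + ∫ t in Ioi (0:ℝ), stdNormalPDF t = 1 := by
    unfold stdNormalCDF
    rw [intervalIntegral.integral_Iic_add_Ioi integrable_phi.integrableOn integrable_phi.integrableOn,
      integral_phi]
  linarith [hsym, hadd]

lemma cdf_mono : Monotone stdNormalCDF := by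
  intro a b hab
  unfold stdNormalCDF
  exact setIntegral_mono_set integrable_phi.integrableOn
    (Filter.Eventually.of_forall fun x => (phi_pos x).le)
    (HasSubset.Subset.eventuallyLE (Iic_subset_Iic.mpr hab))

lemma cdf_gt_half {a : ℝ} (ha : 0 < a) : 1/2 < stdNormalCDF a := by
  have hsplit : stdNormalCDF a = stdNormalCDF 0 + ∫ t in Ioc (0:ℝ) a, stdNormalPDF t := by
    unfold stdNormalCDF
    rw [← setIntegral_union (Iic_disjoint_Ioc le_rfl) measurableSet_Ioc
      integrable_phi.integrableOn integrable_phi.integrableOn, Iic_union_Ioc_eq_Iic ha.le]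
  have hpos : 0 < ∫ t in Ioc (0:ℝ) a, stdNormalPDF t := by
    rw [← intervalIntegral.integral_of_le ha.le]
    exact intervalIntegral.intervalIntegral_pos_of_pos_on
      integrable_phi.intervalIntegrable (fun x _ => phi_pos x) ha
  rw [hsplit, cdf_zero]; linarith

lemma measurable_phi : Measurable stdNormalPDF := by
  unfold stdNormalPDF; fun_prop

theorem sdtn_truncated_second_moment_bound (η ρ ρl ηb c : ℝ)
    (hη : 0 < η) (hρl : 0 < ρl) (hρ : ρl ≤ ρ) (hηb : η ≤ ηb) (hc : 0 < c) :
    (∫ y in {y : ℝ | c ≤ |y|}, y ^ 2 * sdtnPDF 0 η ρ y) ≤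
      ηb ^ 2 * (1 / (2 * stdNormalCDF ρl - 1)) * Real.sqrt (2 / Real.pi) *
        ∫ u in Set.Ici (c / ηb), u ^ 2 * Real.exp (-u ^ 2 / 2) := by
  have hπ := Real.pi_pos
  have hηb' : 0 < ηb := lt_of_lt_of_le hη hηb
  set K := 2 * stdNormalCDF ρl - 1 with hKdef
  have hK : 0 < K := by
    have := cdf_gt_half hρl; rw [hKdef]; linarith
  have hKρ : K ≤ 2 * stdNormalCDF ρ - 1 := by
    have := cdf_mono hρ; rw [hKdef]; linarith
  have hKρ' : 0 < 2 * stdNormalCDF ρ - 1 := lt_of_lt_of_le hK hKρ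
  -- dominating function g
  set g : ℝ → ℝ := fun y => y ^ 2 * (stdNormalPDF (y / η) / (η * K)) with hgdef
  have hb2 : (0:ℝ) < 1 / (2 * η ^ 2) := by positivity
  have hgeq : ∀ y : ℝ, g y =
      ((Real.sqrt (2 * Real.pi))⁻¹ / (η * K)) * (y ^ 2 * Real.exp (-(1/(2*η^2)) * y ^ 2)) := by
    intro y
    rw [hgdef]
    show y ^ 2 * (stdNormalPDF (y / η) / (η * K)) = _
    unfold stdNormalPDF
    have hexp : -(y/η)^2/2 = -(1/(2*η^2)) * y^2 := by
      rw [div_pow]; field_simp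
    rw [hexp]
    ring
  have hintg : Integrable g := by
    have := (integrable_sq_exp hb2).const_mul ((Real.sqrt (2 * Real.pi))⁻¹ / (η * K))
    exact this.congr (Filter.Eventually.of_forall fun y => (hgeq y).symm)
  -- pointwise bound
  have hsdtn_nonneg : ∀ y : ℝ, 0 ≤ sdtnPDF 0 η ρ y := by
    intro y
    unfold sdtnPDF
    split_ifs
    · exact div_nonneg (phi_pos _).le (by positivity)
    · exact le_rfl
  have hptw : ∀ y : ℝ, y ^ 2 * sdtnPDF 0 η ρ y ≤ g y := by
    intro y
    rw [hgdef]
    show _ ≤ y ^ 2 * (stdNormalPDF (y / η) / (η * K))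
    unfold sdtnPDF
    split_ifs with h
    · simp only [sub_zero]
      apply mul_le_mul_of_nonneg_left _ (sq_nonneg y)
      gcongr
      exact (phi_pos _).le
    · rw [mul_zero]
      exact mul_nonneg (sq_nonneg y) (div_nonneg (phi_pos _).le (mul_pos hη hK).le)
  have hmeas : Measurable (fun y : ℝ => y ^ 2 * sdtnPDF 0 η ρ y) := by
    apply Measurable.mul (by fun_prop)
    unfold sdtnPDF
    exact Measurable.ite measurableSet_Icc
      ((measurable_phi.comp (by fun_prop)).div_const _) measurable_const
  have hintL : Integrable (fun y : ℝ => y ^ 2 * sdtnPDF 0 η ρ y) := by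
    apply hintg.mono hmeas.aestronglyMeasurable
    filter_upwards with y
    rw [Real.norm_eq_abs, Real.norm_eq_abs,
      abs_of_nonneg (mul_nonneg (sq_nonneg y) (hsdtn_nonneg y)),
      abs_of_nonneg (le_trans (mul_nonneg (sq_nonneg y) (hsdtn_nonneg y)) (hptw y))]
    exact hptw y
  have hS : {y : ℝ | c ≤ |y|} = Iic (-c) ∪ Ici c := by
    ext y
    simp only [mem_setOf_eq, mem_union, mem_Iic, mem_Ici, le_abs, le_neg]
    tauto
  -- step 1
  have step1 : (∫ y in {y : ℝ | c ≤ |y|}, y ^ 2 * sdtnPDF 0 η ρ y) ≤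
      ∫ y in {y : ℝ | c ≤ |y|}, g y :=
    setIntegral_mono hintL.integrableOn hintg.integrableOn hptw
  -- symmetry
  have hgeven : ∀ y : ℝ, g (-y) = g y := by
    intro y
    rw [hgeq, hgeq]
    rw [neg_pow]
    ring_nf
  have step2 : ∫ y in {y : ℝ | c ≤ |y|}, g y = 2 * ∫ y in Ioi c, g y := by
    rw [hS, setIntegral_union (Iic_disjoint_Ici.mpr (by linarith)) measurableSet_Ici
      hintg.integrableOn hintg.integrableOn]
    have h1 : ∫ y in Iic (-c), g y = ∫ y in Ioi c, g y := by
      rw [show (∫ y in Iic (-c), g y) = ∫ y in Iic (-c), g (-y) from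
        setIntegral_congr_fun measurableSet_Iic fun y _ => (hgeven y).symm,
        integral_comp_neg_Iic, neg_neg]
    rw [h1, integral_Ici_eq_integral_Ioi]
    ring
  -- substitution
  have hIint : Integrable (fun x : ℝ => x ^ 2 * Real.exp (-x ^ 2 / 2)) := by
    have := integrable_sq_exp (show (0:ℝ) < 1/2 by norm_num)
    simpa only [show ∀ x : ℝ, -(1/2 : ℝ) * x ^ 2 = -x ^ 2 / 2 from fun x => by ring] using this
  have step3 : ∫ y in Ioi c, g y =
      (η ^ 2 / K) * ((Real.sqrt (2 * Real.pi))⁻¹ *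
        ∫ x in Ioi (c / η), x ^ 2 * Real.exp (-x ^ 2 / 2)) := by
    have hsub := integral_comp_mul_left_Ioi g (c / η) hη
    rw [show η * (c / η) = c by field_simp] at hsub
    have : ∫ y in Ioi c, g y = η * ∫ x in Ioi (c / η), g (η * x) := by
      rw [hsub, smul_eq_mul, ← mul_assoc, mul_inv_cancel₀ hη.ne', one_mul]
    rw [this]
    have hg2 : ∀ x : ℝ, g (η * x) =
        ((η ^ 2 / (η * K)) * (Real.sqrt (2 * Real.pi))⁻¹) * (x ^ 2 * Real.exp (-x ^ 2 / 2)) := by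
      intro x
      rw [hgdef]
      show (η * x) ^ 2 * (stdNormalPDF ((η * x) / η) / (η * K)) = _
      rw [show η * x / η = x by field_simp]
      unfold stdNormalPDF
      ring
    rw [setIntegral_congr_fun measurableSet_Ioi fun x _ => hg2 x, integral_const_mul]
    field_simp
  -- monotonicity of tail integral
  have hImono : (∫ x in Ioi (c / η), x ^ 2 * Real.exp (-x ^ 2 / 2)) ≤
      ∫ x in Ioi (c / ηb), x ^ 2 * Real.exp (-x ^ 2 / 2) := by
    apply setIntegral_mono_set hIint.integrableOn
      (Filter.Eventually.of_forall fun x => by positivity)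
    have : Ioi (c / η) ⊆ Ioi (c / ηb) := Ioi_subset_Ioi (by gcongr)
    exact HasSubset.Subset.eventuallyLE this
  have hInn : (0:ℝ) ≤ ∫ x in Ioi (c / η), x ^ 2 * Real.exp (-x ^ 2 / 2) :=
    integral_nonneg fun x => by positivity
  have hInn' : (0:ℝ) ≤ ∫ x in Ioi (c / ηb), x ^ 2 * Real.exp (-x ^ 2 / 2) :=
    integral_nonneg fun x => by positivity
  have hsqrt : Real.sqrt (2 / Real.pi) = 2 * (Real.sqrt (2 * Real.pi))⁻¹ := by
    have h2π : Real.sqrt (2 * Real.pi) ^ 2 = 2 * Real.pi := Real.sq_sqrt (by positivity)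
    have hs : 0 < Real.sqrt (2 * Real.pi) := Real.sqrt_pos.mpr (by positivity)
    rw [show 2 / Real.pi = (2 * (Real.sqrt (2 * Real.pi))⁻¹) ^ 2 by
      rw [mul_pow, inv_pow, h2π]; field_simp]
    exact Real.sqrt_sq (by positivity)
  calc (∫ y in {y : ℝ | c ≤ |y|}, y ^ 2 * sdtnPDF 0 η ρ y)
      ≤ ∫ y in {y : ℝ | c ≤ |y|}, g y := step1
    _ = 2 * ∫ y in Ioi c, g y := step2
    _ = 2 * ((η ^ 2 / K) * ((Real.sqrt (2 * Real.pi))⁻¹ *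
        ∫ x in Ioi (c / η), x ^ 2 * Real.exp (-x ^ 2 / 2))) := by rw [step3]
    _ ≤ 2 * ((ηb ^ 2 / K) * ((Real.sqrt (2 * Real.pi))⁻¹ *
        ∫ x in Ioi (c / ηb), x ^ 2 * Real.exp (-x ^ 2 / 2))) := by
        gcongr
    _ = ηb ^ 2 * (1 / K) * Real.sqrt (2 / Real.pi) *
        ∫ u in Set.Ici (c / ηb), u ^ 2 * Real.exp (-u ^ 2 / 2) := by
        rw [hsqrt, integral_Ici_eq_integral_Ioi]
        ring
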